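/- arXiv:1206.6027 — 2 statements merged into one kernel-verified Lean document; each statement's English description precedes it below -/
import Mathlib

section
/- For every multigraded ℕ-ideal J of P̄, the saturation is Sat(J) = {f ∈ P̄ : (∏_k t(k)^{μ_k})·f ∈ J for some finitely supported multidegree μ = (μ_k)_{k∈ℕ*}}. -/
noncomputable section

/-! ### Common definitions for the letterplace correspondence (La Scala)

`FA K Y` is the free associative algebra `K⟨Y⟩` (monoid algebra of the free monoid on `Y`);
`PL K Y` is the letterplace polynomial algebra `K[y(j) : y ∈ Y, j ∈ ℕ*]`.
The algebra `F̄ = K⟨X ∪ {t}⟩` is modeled as `FA K (Option X)` with `t = none`,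
and similarly `P̄ = PL K (Option X)`. -/

/-- The free associative algebra `K⟨Y⟩`. -/
abbrev FA (K : Type*) [CommSemiring K] (Y : Type*) := MonoidAlgebra K (FreeMonoid Y)

/-- The letterplace polynomial algebra `K[y(j)]`, with places in `ℕ* = ℕ+`. -/
abbrev PL (K : Type*) [CommSemiring K] (Y : Type*) := MvPolynomial (Y × ℕ+) K

variable (K : Type*) [Field K]

/-- The generator of `K⟨Y⟩` corresponding to a letter. -/
def gen {Y : Type*} (y : Y) : FA K Y := MonoidAlgebra.of K (FreeMonoid Y) (FreeMonoid.of y)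

/-- The extra letter `t` of `F̄ = K⟨X ∪ {t}⟩`. -/
def tv {X : Type*} : FA K (Option X) := gen K (none : Option X)

/-- `φ : F̄ → F̄`, the algebra endomorphism with `φ(x_i) = x_i`, `φ(t) = 1`. -/
def phi {X : Type*} : FA K (Option X) →ₐ[K] FA K (Option X) :=
  (MonoidAlgebra.lift K (FA K (Option X)) (FreeMonoid (Option X)))
    (FreeMonoid.lift fun o => Option.elim o 1 (fun x => gen K (some x)))

/-- `f` is homogeneous of degree `d` (all words in its support have length `d`). -/
def IsHomog {Y : Type*} (d : ℕ) (f : FA K Y) : Prop :=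
  ∀ w ∈ f.coeff.support, FreeMonoid.length w = d

/-- The homogeneous component of degree `d` of `f ∈ K⟨Y⟩`. -/
def homComp {Y : Type*} (d : ℕ) (f : FA K Y) : FA K Y :=
  ∑ w ∈ f.coeff.support.filter (fun w => FreeMonoid.length w = d), MonoidAlgebra.single w (f.coeff w)

/-- A two-sided ideal is graded (for the grading by total degree) iff it contains all
homogeneous components of its elements. -/
def IsGradedF {Y : Type*} (I : TwoSidedIdeal (FA K Y)) : Prop := ∀ f ∈ I, ∀ d, homComp K d f ∈ I

/-- `C ⊆ F̄`: the two-sided ideal generated by all homogeneous elements of `ker φ`,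
i.e. the largest graded ideal contained in `ker φ`. -/
def Cideal {X : Type*} : TwoSidedIdeal (FA K (Option X)) :=
  TwoSidedIdeal.span {f | (∃ d, IsHomog K d f) ∧ phi K f = 0}

/-- The embedding of free monoids `X* → (X ∪ {t})*`. -/
def embWord {X : Type*} : FreeMonoid X →* FreeMonoid (Option X) := FreeMonoid.map some

/-- The canonical embedding `F = K⟨X⟩ → F̄ = K⟨X ∪ {t}⟩`. -/
def emb {X : Type*} : FA K X →ₐ[K] FA K (Option X) :=
  (MonoidAlgebra.lift K (FA K (Option X)) (FreeMonoid X))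
    ((MonoidAlgebra.of K (FreeMonoid (Option X))).comp embWord)

/-- The top degree `deg(f)` of `f` (max length of a word in the support). -/
def degF {Y : Type*} (f : FA K Y) : ℕ := f.coeff.support.sup FreeMonoid.length

/-- The homogenization `f^* = Σ_k f_k t^{deg f − k} ∈ F̄` of `f ∈ F`. -/
def hstar {X : Type*} (f : FA K X) : FA K (Option X) :=
  ∑ w ∈ f.coeff.support,
    MonoidAlgebra.single
      (embWord w * (FreeMonoid.of (none : Option X)) ^ (degF K f - FreeMonoid.length w)) (f.coeff w)

/-- Homogenization of an element already written in `F̄` (used for elements of `φ(F̄) = F`). -/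
def hstarO {X : Type*} (f : FA K (Option X)) : FA K (Option X) :=
  ∑ w ∈ f.coeff.support,
    MonoidAlgebra.single
      (w * (FreeMonoid.of (none : Option X)) ^ (degF K f - FreeMonoid.length w)) (f.coeff w)

/-- The homogenization `I^*` of an ideal `I ⊆ F`: the two-sided ideal of `F̄` generated by all
homogeneous elements of `φ⁻¹(I)` (identifying `F` with its image in `F̄`). -/
def hstarIdeal {X : Type*} (I : TwoSidedIdeal (FA K X)) : TwoSidedIdeal (FA K (Option X)) :=
  TwoSidedIdeal.span {g | (∃ d, IsHomog K d g) ∧ ∃ f ∈ I, phi K g = emb K f}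

/-- The saturation `Sat(J) = φ(J)^*` of a graded ideal `C ⊆ J ⊆ F̄`: the two-sided ideal
generated by all homogeneous elements `g` with `φ(g) ∈ φ(J)`. -/
def SatF {X : Type*} (J : TwoSidedIdeal (FA K (Option X))) : TwoSidedIdeal (FA K (Option X)) :=
  TwoSidedIdeal.span {g | (∃ d, IsHomog K d g) ∧ ∃ h ∈ J, phi K g = phi K h}

/-! ### The commutative (letterplace) side -/

/-- The shift of letterplace variables: `k · y(j) = y(j + k)`. -/
def shiftVar {Y : Type*} (k : ℕ) (p : Y × ℕ+) : Y × ℕ+ :=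
  (p.1, ⟨p.2 + k, Nat.add_pos_left p.2.2 k⟩)

/-- The action of `k ∈ ℕ` on the letterplace algebra. -/
def shift {Y : Type*} (k : ℕ) : PL K Y →ₐ[K] PL K Y := MvPolynomial.rename (shiftVar k)

/-- An ideal of `PL K Y` is an ℕ-ideal if it is stable under all shifts. -/
def IsNIdeal {Y : Type*} (I : Ideal (PL K Y)) : Prop := ∀ k, ∀ f ∈ I, shift K k f ∈ I

/-- The ℕ-ideal `⟨S⟩_ℕ` generated by a set `S`. -/
def nspan {Y : Type*} (S : Set (PL K Y)) : Ideal (PL K Y) :=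
  Ideal.span {g | ∃ k, ∃ f ∈ S, g = shift K k f}

/-- The place multidegree `∂(m)` of a monomial. -/
def placeDeg {Y : Type*} (m : (Y × ℕ+) →₀ ℕ) : ℕ+ →₀ ℕ := Finsupp.mapDomain Prod.snd m

/-- `f` is multihomogeneous of place multidegree `μ`. -/
def IsMultiHomog {Y : Type*} (μ : ℕ+ →₀ ℕ) (f : PL K Y) : Prop :=
  ∀ m ∈ f.support, placeDeg m = μ

/-- The multihomogeneous component of multidegree `μ` of `f`. -/
def mComp {Y : Type*} (μ : ℕ+ →₀ ℕ) (f : PL K Y) : PL K Y :=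
  ∑ m ∈ f.support.filter (fun m => placeDeg m = μ),
    MvPolynomial.monomial m (MvPolynomial.coeff m f)

/-- An ideal is multigraded iff it contains all multihomogeneous components of its elements. -/
def IsMultiGraded {Y : Type*} (I : Ideal (PL K Y)) : Prop := ∀ f ∈ I, ∀ μ, mComp K μ f ∈ I

/-- `ψ : P̄ → P̄`, with `ψ(x_i(j)) = x_i(j)` and `ψ(t(j)) = 1`. -/
def psi {X : Type*} : PL K (Option X) →ₐ[K] PL K (Option X) :=
  MvPolynomial.aeval (fun p => Option.elim p.1 1 (fun x => MvPolynomial.X (some x, p.2)))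

/-- The canonical embedding `P → P̄`. -/
def embP {X : Type*} : PL K X →ₐ[K] PL K (Option X) :=
  MvPolynomial.rename (fun p => (some p.1, p.2))

/-- The top multidegree `∂(f)` of `f` (componentwise max over the support). -/
def topDeg {Y : Type*} (f : PL K Y) : ℕ+ →₀ ℕ := f.support.sup placeDeg

/-- The pure-`t` monomial `∏_k t(k)^{ν_k}` with exponents `ν`. -/
def tExp {X : Type*} (ν : ℕ+ →₀ ℕ) : ((Option X) × ℕ+) →₀ ℕ :=
  Finsupp.mapDomain (fun k => ((none : Option X), k)) ν

/-- The multihomogenization `f^* = Σ_μ f_μ ∏_k t(k)^{ν_k − μ_k} ∈ P̄` of `f ∈ P`. -/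
def mhstar {X : Type*} (f : PL K X) : PL K (Option X) :=
  ∑ m ∈ f.support,
    MvPolynomial.monomial
      (Finsupp.mapDomain (fun p => ((some p.1 : Option X), p.2)) m +
        tExp (topDeg K f - placeDeg m))
      (MvPolynomial.coeff m f)

/-- Multihomogenization of an element already written in `P̄` (used for elements of `ψ(P̄) = P`). -/
def mhstarO {X : Type*} (f : PL K (Option X)) : PL K (Option X) :=
  ∑ m ∈ f.support,
    MvPolynomial.monomial (m + tExp (topDeg K f - placeDeg m)) (MvPolynomial.coeff m f)

/-- The multihomogenization `I^*` of an ℕ-ideal `I ⊆ P`: the ℕ-ideal of `P̄` generated by all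
multihomogeneous elements of `ψ⁻¹(I)` (identifying `P` with its image in `P̄`). -/
def mhstarIdeal {X : Type*} (I : Ideal (PL K X)) : Ideal (PL K (Option X)) :=
  nspan K {g | (∃ μ, IsMultiHomog K μ g) ∧ ∃ f ∈ I, psi K g = embP K f}

/-- The saturation `Sat(J) = ψ(J)^*` of a multigraded ℕ-ideal `J ⊆ P̄`. -/
def SatP {X : Type*} (J : Ideal (PL K (Option X))) : Ideal (PL K (Option X)) :=
  nspan K {g | (∃ μ, IsMultiHomog K μ g) ∧ ∃ h ∈ J, psi K g = psi K h}

/-! ### The letterplace embedding -/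

/-- Exponent vector of the letterplace monomial `y_1(n+1) y_2(n+2) ⋯` of a word. -/
def wordExpAux {Y : Type*} : ℕ → List Y → ((Y × ℕ+) →₀ ℕ)
  | _, [] => 0
  | n, y :: w => Finsupp.single (y, ⟨n + 1, n.succ_pos⟩) 1 + wordExpAux (n + 1) w

/-- The letterplace monomial `y_1(1) y_2(2) ⋯ y_d(d)` of a word `y_1 y_2 ⋯ y_d`. -/
def wordExp {Y : Type*} (w : FreeMonoid Y) : (Y × ℕ+) →₀ ℕ := wordExpAux 0 (FreeMonoid.toList w)

/-- The letterplace embedding `ι : K⟨Y⟩ → PL K Y` (a `K`-linear map). -/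
def iota {Y : Type*} (f : FA K Y) : PL K Y :=
  Finsupp.sum f.coeff fun w c => MvPolynomial.monomial (wordExp w) c

/-- The set `L` of multilinear elements of `PL K Y`: multihomogeneous elements of `V = Im ι`. -/
def Lset {Y : Type*} : Set (PL K Y) :=
  {f | f ∈ Set.range (iota K (Y := Y)) ∧ ∃ μ, IsMultiHomog K μ f}

/-- A letterplace ideal (`L`-ideal): an ℕ-ideal ℕ-generated by its multilinear elements. -/
def IsLPIdeal {Y : Type*} (J : Ideal (PL K Y)) : Prop :=
  IsNIdeal K J ∧ J = nspan K ((J : Set (PL K Y)) ∩ Lset K)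

/-- The generators `x_i(1)t(2) − t(1)x_i(2)` of `D`. -/
def Dgens (X : Type*) : Set (PL K (Option X)) :=
  {g | ∃ x : X,
    g = MvPolynomial.X ((some x : Option X), (1 : ℕ+)) *
          MvPolynomial.X ((none : Option X), (2 : ℕ+)) -
        MvPolynomial.X ((none : Option X), (1 : ℕ+)) *
          MvPolynomial.X ((some x : Option X), (2 : ℕ+))}

/-- The generators `ῑ([t, x_i]) = t(1)x_i(2) − x_i(1)t(2)` of `D`. -/
def DgensT (X : Type*) : Set (PL K (Option X)) :=
  {g | ∃ x : X,
    g = MvPolynomial.X ((none : Option X), (1 : ℕ+)) *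
          MvPolynomial.X ((some x : Option X), (2 : ℕ+)) -
        MvPolynomial.X ((some x : Option X), (1 : ℕ+)) *
          MvPolynomial.X ((none : Option X), (2 : ℕ+))}

/-- `D ⊆ P̄`: the letterplace analogue of `C`. -/
def Did (X : Type*) : Ideal (PL K (Option X)) := nspan K (Dgens K X)

/-- The product `∏_{d < k ≤ d'} t(k)`. -/
def tProd (X : Type*) (d d' : ℕ) : PL K (Option X) :=
  ∏ k ∈ Finset.range (d' - d), MvPolynomial.X ((none : Option X), ⟨d + k + 1, Nat.succ_pos _⟩)

/-- The `L`-saturation `Sat_L(J)` of a letterplace ideal `D ⊆ J ⊆ P̄`. -/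
def SatL {X : Type*} (J : Ideal (PL K (Option X))) : Ideal (PL K (Option X)) :=
  nspan K {f | f ∈ Lset K ∧ ∃ d', MvPolynomial.totalDegree f ≤ d' ∧
    tProd K X (MvPolynomial.totalDegree f) d' * f ∈ J}

/-- `J` is `L`-saturated: `t(d+1)·f ∈ J` with `f` multilinear of degree `d` implies `f ∈ J`. -/
def IsLSat {X : Type*} (J : Ideal (PL K (Option X))) : Prop :=
  ∀ f ∈ Lset K (Y := Option X),
    MvPolynomial.X ((none : Option X), ⟨MvPolynomial.totalDegree f + 1, Nat.succ_pos _⟩) * f ∈ J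
      → f ∈ J

/-! ### Monomial orderings -/

/-- The shift action on letterplace monomials. -/
def shiftMon {Y : Type*} (k : ℕ) (m : (Y × ℕ+) →₀ ℕ) : (Y × ℕ+) →₀ ℕ :=
  Finsupp.mapDomain (shiftVar k) m

/-- A monomial ordering of a (possibly infinite) commutative polynomial ring, given as a strict
order relation on exponent vectors: a well-founded strict total order with `1` minimal,
compatible with multiplication of monomials. -/
structure IsMonOrd {σ : Type*} (r : (σ →₀ ℕ) → (σ →₀ ℕ) → Prop) : Prop where
  total : ∀ m n, r m n ∨ m = n ∨ r n m
  irrefl : ∀ m, ¬ r m m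
  trans : ∀ a b c, r a b → r b c → r a c
  wf : WellFounded r
  zero_min : ∀ m, ¬ r m 0
  add_compat : ∀ m n u, r m n → r (u + m) (u + n)

/-- The ordering is compatible with the ℕ-action (an `ℕ`-ordering). -/
def IsNCompat {Y : Type*} (r : ((Y × ℕ+) →₀ ℕ) → ((Y × ℕ+) →₀ ℕ) → Prop) : Prop :=
  ∀ (k : ℕ) m n, r m n → r (shiftMon k m) (shiftMon k n)

/-- The weight of a letterplace monomial: the largest place index occurring in it
(`⊥ = -∞` for the monomial `1`). -/
def wt {Y : Type*} (m : (Y × ℕ+) →₀ ℕ) : WithBot ℕ :=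
  m.support.sup (fun p => ((p.2 : ℕ) : WithBot ℕ))

/-- A weighted ordering: smaller weight implies smaller monomial. -/
def IsWeighted {Y : Type*} (r : ((Y × ℕ+) →₀ ℕ) → ((Y × ℕ+) →₀ ℕ) → Prop) : Prop :=
  ∀ m n, wt m < wt n → r m n

/-- A monomial ordering of the free algebra `K⟨Y⟩`: a well-founded strict total order on words
compatible with two-sided multiplication. -/
structure IsWordOrd {Y : Type*} (r : FreeMonoid Y → FreeMonoid Y → Prop) : Prop where
  total : ∀ m n, r m n ∨ m = n ∨ r n m
  irrefl : ∀ m, ¬ r m m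
  trans : ∀ a b c, r a b → r b c → r a c
  wf : WellFounded r
  mul_compat : ∀ m n u v, r m n → r (u * m * v) (u * n * v)

/-- A word ordering is graded if shorter words are smaller. -/
def IsGradedWordOrd {Y : Type*} (r : FreeMonoid Y → FreeMonoid Y → Prop) : Prop :=
  ∀ m n, FreeMonoid.length m < FreeMonoid.length n → r m n

/-- The word ordering of `K⟨Y⟩` induced by a monomial ordering of `PL K Y` via `ι`. -/
def inducedWordOrd {Y : Type*} (r : ((Y × ℕ+) →₀ ℕ) → ((Y × ℕ+) →₀ ℕ) → Prop)
    (m n : FreeMonoid Y) : Prop := r (wordExp m) (wordExp n)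

/-- The factor of a letterplace monomial at place `j` (a monomial of `P(j) ≅ P(1)`). -/
def fiber {Y : Type*} (m : (Y × ℕ+) →₀ ℕ) (j : ℕ+) : Y →₀ ℕ :=
  Finsupp.comapDomain (fun y => (y, j)) m (fun _ _ _ _ h => congrArg Prod.fst h)

/-- The place `ℕ`-ordering of `PL K Y` induced by a monomial ordering `r1` of `P(1)`:
compare the factors at the highest place where the two monomials differ. -/
def placeExt {Y : Type*} (r1 : (Y →₀ ℕ) → (Y →₀ ℕ) → Prop)
    (m n : (Y × ℕ+) →₀ ℕ) : Prop :=
  ∃ j : ℕ+, r1 (fiber m j) (fiber n j) ∧ ∀ j', j < j' → fiber m j' = fiber n j'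

/-! ### Leading monomials and Gröbner bases -/

/-- `m` is the leading monomial of `f ∈ PL K Y` with respect to the ordering `r`. -/
def IsLM {Y : Type*} (r : ((Y × ℕ+) →₀ ℕ) → ((Y × ℕ+) →₀ ℕ) → Prop)
    (f : PL K Y) (m : (Y × ℕ+) →₀ ℕ) : Prop :=
  m ∈ f.support ∧ ∀ m' ∈ f.support, m' ≠ m → r m' m

/-- `LM(S)`: the ideal generated by the leading monomials of the nonzero elements of `S`. -/
def LMideal {Y : Type*} (r : ((Y × ℕ+) →₀ ℕ) → ((Y × ℕ+) →₀ ℕ) → Prop)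
    (S : Set (PL K Y)) : Ideal (PL K Y) :=
  Ideal.span {p | ∃ f ∈ S, f ≠ 0 ∧ ∃ m, IsLM K r f m ∧ p = MvPolynomial.monomial m (1 : K)}

/-- The ideal generated by `ℕ·lm(G)`. -/
def shLMideal {Y : Type*} (r : ((Y × ℕ+) →₀ ℕ) → ((Y × ℕ+) →₀ ℕ) → Prop)
    (G : Set (PL K Y)) : Ideal (PL K Y) :=
  Ideal.span {p | ∃ g ∈ G, g ≠ 0 ∧ ∃ m, IsLM K r g m ∧
    ∃ k : ℕ, p = MvPolynomial.monomial (shiftMon k m) (1 : K)}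

/-- `G ⊆ I` is a Gröbner `ℕ`-basis of the ℕ-ideal `I`: `ℕ·lm(G)` generates `LM(I)`. -/
def IsGroebnerNB {Y : Type*} (r : ((Y × ℕ+) →₀ ℕ) → ((Y × ℕ+) →₀ ℕ) → Prop)
    (I : Ideal (PL K Y)) (G : Set (PL K Y)) : Prop :=
  G ⊆ (I : Set (PL K Y)) ∧ shLMideal K r G = LMideal K r (I : Set (PL K Y))

/-- `G` is a Gröbner `L`-basis of the letterplace ideal `J`: `G ⊆ J ∩ L` and the leading monomial
of every nonzero multilinear element of `J` is divisible by a shift of some `lm(g)`, `g ∈ G`. -/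
def IsGroebnerLB {Y : Type*} (r : ((Y × ℕ+) →₀ ℕ) → ((Y × ℕ+) →₀ ℕ) → Prop)
    (J : Ideal (PL K Y)) (G : Set (PL K Y)) : Prop :=
  G ⊆ (J : Set (PL K Y)) ∩ Lset K ∧
  ∀ f ∈ (J : Set (PL K Y)) ∩ Lset K, f ≠ 0 →
    ∃ g ∈ G, ∃ (k : ℕ) (mg mf : (Y × ℕ+) →₀ ℕ),
      IsLM K r g mg ∧ IsLM K r f mf ∧ shiftMon k mg ≤ mf

/-- `w` is the leading monomial (word) of `f ∈ K⟨Y⟩` with respect to the word ordering `r'`. -/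
def IsLMF {Y : Type*} (r' : FreeMonoid Y → FreeMonoid Y → Prop)
    (f : FA K Y) (w : FreeMonoid Y) : Prop :=
  w ∈ f.coeff.support ∧ ∀ w' ∈ f.coeff.support, w' ≠ w → r' w' w

/-- `G ⊆ I` is a Gröbner basis of the two-sided ideal `I ⊆ K⟨Y⟩`: the leading word of every
nonzero `f ∈ I` has the form `u · lm(g) · v` for some nonzero `g ∈ G`. -/
def IsGroebnerBF {Y : Type*} (r' : FreeMonoid Y → FreeMonoid Y → Prop)
    (I : TwoSidedIdeal (FA K Y)) (G : Set (FA K Y)) : Prop :=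
  G ⊆ (I : Set (FA K Y)) ∧
  ∀ f ∈ I, f ≠ 0 → ∃ g ∈ G, g ≠ 0 ∧ ∃ (u v wf wg : FreeMonoid Y),
    IsLMF K r' f wf ∧ IsLMF K r' g wg ∧ wf = u * wg * v

/-! ### Normal forms -/

/-- The generators `x_i(1) x_j(1)` of `N`. -/
def Ngens (Y : Type*) : Set (PL K Y) :=
  {g | ∃ i j : Y, g = MvPolynomial.X (i, (1 : ℕ+)) * MvPolynomial.X (j, (1 : ℕ+))}

/-- A polynomial is in normal form modulo `N` iff in each of its monomials all place indices
are pairwise distinct. -/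
def NormalModN {Y : Type*} (f : PL K Y) : Prop :=
  ∀ m ∈ f.support, ∀ k : ℕ+, placeDeg m k ≤ 1

/-- A polynomial is in normal form modulo `D` iff none of its monomials is divisible by a shift
of the leading monomial of some generator `t(1)x_i(2) − x_i(1)t(2)` of `D`. -/
def NormalModD {X : Type*} (r : (((Option X) × ℕ+) →₀ ℕ) → (((Option X) × ℕ+) →₀ ℕ) → Prop)
    (f : PL K (Option X)) : Prop :=
  ∀ m ∈ f.support, ∀ g ∈ DgensT K X, ∀ mg, IsLM K r g mg → ∀ k : ℕ, ¬ shiftMon k mg ≤ m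

/-- `G` is a Gröbner `L`-basis of `J` modulo `D`: its elements are multilinear elements of `J`
in normal form modulo `D`, and together with the generators of `D` they form a
Gröbner `L`-basis of `J`. -/
def IsGroebnerLBmodD {X : Type*}
    (r : (((Option X) × ℕ+) →₀ ℕ) → (((Option X) × ℕ+) →₀ ℕ) → Prop)
    (J : Ideal (PL K (Option X))) (G : Set (PL K (Option X))) : Prop :=
  (∀ g ∈ G, g ∈ (J : Set (PL K (Option X))) ∩ Lset K ∧ NormalModD K r g) ∧
  IsGroebnerLB K r J (G ∪ DgensT K X)

/-- The commutators `[t, x_i] = t x_i − x_i t` in `F̄`. -/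
def commGens (X : Type*) : Set (FA K (Option X)) :=
  {h | ∃ x : X, h = tv K * gen K (some x) - gen K (some x) * tv K}

/-- A polynomial of `F̄` is in normal form modulo `C` iff none of its words contains the leading
word of some commutator `[t, x_i]` as a factor. -/
def NormalModC {X : Type*} (r' : FreeMonoid (Option X) → FreeMonoid (Option X) → Prop)
    (f : FA K (Option X)) : Prop :=
  ∀ w ∈ f.coeff.support, ∀ g ∈ commGens K X, ∀ wg, IsLMF K r' g wg →
    ¬ ∃ u v, w = u * wg * v

/-! ### Concrete orderings on words -/

/-- The order on the letters of `X ∪ {t}` (with `X = ℕ`): `t ≺ x_1 ≺ x_2 ≺ ⋯`. -/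
def optLt : Option ℕ → Option ℕ → Prop
  | none, some _ => True
  | some i, some j => i < j
  | _, none => False

/-- The graded right lexicographic ordering on words: first compare lengths, then compare
letter by letter from the right. -/
def grRightLex {Y : Type*} (lt : Y → Y → Prop) (dflt : Y) (m n : FreeMonoid Y) : Prop :=
  FreeMonoid.length m < FreeMonoid.length n ∨
  (FreeMonoid.length m = FreeMonoid.length n ∧
    ∃ t < FreeMonoid.length m,
      lt ((FreeMonoid.toList m).getD t dflt) ((FreeMonoid.toList n).getD t dflt) ∧
      ∀ s, t < s → (FreeMonoid.toList m).getD s dflt = (FreeMonoid.toList n).getD s dflt)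

end


noncomputable section Stmt6Aux

open MvPolynomial

variable {K : Type*} [Field K] {X : Type*}

instance st6_decNone {X : Type*} (o : Option X) : Decidable (o = none) :=
  match o with
  | none => isTrue rfl
  | some _ => isFalse (fun h => nomatch h)

lemma st6_tExp_apply_none (ν : ℕ+ →₀ ℕ) (j : ℕ+) :
    tExp (X := X) ν ((none : Option X), j) = ν j :=
  Finsupp.mapDomain_apply (fun a b h => by simpa using congrArg Prod.snd h) ν j

lemma st6_tExp_apply_some (ν : ℕ+ →₀ ℕ) (x : X) (j : ℕ+) :
    tExp ν ((some x : Option X), j) = 0 :=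
  Finsupp.mapDomain_notin_range ν _ (by rintro ⟨k, hk⟩; simp at hk)

lemma st6_tExp_add (μ ν : ℕ+ →₀ ℕ) :
    tExp (X := X) (μ + ν) = tExp μ + tExp ν :=
  Finsupp.mapDomain_add

lemma st6_placeDeg_add {Y : Type*} (a b : (Y × ℕ+) →₀ ℕ) :
    placeDeg (a + b) = placeDeg a + placeDeg b :=
  Finsupp.mapDomain_add

lemma st6_placeDeg_tExp (ν : ℕ+ →₀ ℕ) : placeDeg (tExp (X := X) ν) = ν := by
  rw [placeDeg, tExp, ← Finsupp.mapDomain_comp]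
  exact Finsupp.mapDomain_id

lemma st6_placeDeg_sub_add {Y : Type*} {u m : (Y × ℕ+) →₀ ℕ} (h : u ≤ m) :
    placeDeg m = placeDeg u + placeDeg (m - u) := by
  rw [← st6_placeDeg_add, add_tsub_cancel_of_le h]

/-- The `t`-part of a monomial of `P̄`, as a multidegree. -/
def st6_td (m : ((Option X) × ℕ+) →₀ ℕ) : ℕ+ →₀ ℕ :=
  Finsupp.comapDomain (fun k => ((none : Option X), k)) m
    (fun _ _ _ _ h => by simpa using congrArg Prod.snd h)

lemma st6_td_apply (m : ((Option X) × ℕ+) →₀ ℕ) (k : ℕ+) :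
    st6_td m k = m ((none : Option X), k) := rfl

/-- The `x`-part of a monomial of `P̄`. -/
def st6_xp (m : ((Option X) × ℕ+) →₀ ℕ) : ((Option X) × ℕ+) →₀ ℕ :=
  m - tExp (st6_td m)

lemma st6_xp_apply_some (m : ((Option X) × ℕ+) →₀ ℕ) (x : X) (j : ℕ+) :
    st6_xp m ((some x : Option X), j) = m ((some x : Option X), j) := by
  rw [st6_xp, Finsupp.tsub_apply, st6_tExp_apply_some, Nat.sub_zero]

lemma st6_xp_apply_none (m : ((Option X) × ℕ+) →₀ ℕ) (j : ℕ+) :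
    st6_xp m ((none : Option X), j) = 0 := by
  rw [st6_xp, Finsupp.tsub_apply, st6_tExp_apply_none, st6_td_apply, Nat.sub_self]

lemma st6_xp_add_tExp (m : ((Option X) × ℕ+) →₀ ℕ) :
    st6_xp m + tExp (st6_td m) = m := by
  ext p
  obtain ⟨o, j⟩ := p
  rw [Finsupp.add_apply]
  cases o with
  | none => rw [st6_xp_apply_none, st6_tExp_apply_none, st6_td_apply, zero_add]
  | some x => rw [st6_xp_apply_some, st6_tExp_apply_some, add_zero]

lemma st6_placeDeg_eq (m : ((Option X) × ℕ+) →₀ ℕ) :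
    placeDeg m = placeDeg (st6_xp m) + st6_td m := by
  conv_lhs => rw [← st6_xp_add_tExp m]
  rw [st6_placeDeg_add, st6_placeDeg_tExp]

lemma st6_xp_tExp (ν : ℕ+ →₀ ℕ) : st6_xp (X := X) (tExp ν) = 0 := by
  ext p
  obtain ⟨o, j⟩ := p
  cases o with
  | none => rw [st6_xp_apply_none]; rfl
  | some x =>
    rw [st6_xp_apply_some, st6_tExp_apply_some]; rfl

lemma st6_support_xp (m : ((Option X) × ℕ+) →₀ ℕ) :
    (st6_xp m).support = m.support.filter (fun p => ¬ p.1 = none) := by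
  ext p
  obtain ⟨o, j⟩ := p
  cases o with
  | none => simp [Finsupp.mem_support_iff, st6_xp_apply_none]
  | some x => simp [Finsupp.mem_support_iff, st6_xp_apply_some]

lemma st6_psi_monomial (m : ((Option X) × ℕ+) →₀ ℕ) (c : K) :
    psi K (monomial m c : PL K (Option X)) = monomial (st6_xp m) c := by
  rw [psi, aeval_monomial, monomial_eq, algebraMap_eq, Finsupp.prod, Finsupp.prod,
    ← Finset.prod_filter_mul_prod_filter_not m.support (fun p => p.1 = none)]
  congr 1
  have h1 : (∏ p ∈ m.support.filter (fun p => p.1 = none),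
      (Option.elim p.1 (1 : PL K (Option X)) (fun x => MvPolynomial.X ((some x : Option X), p.2))) ^ m p) = 1 := by
    apply Finset.prod_eq_one
    rintro ⟨o, j⟩ hp
    have ho : o = none := (Finset.mem_filter.1 hp).2
    subst ho
    simp
  rw [h1, one_mul, st6_support_xp]
  apply Finset.prod_congr rfl
  rintro ⟨o, j⟩ hp
  have ho : ¬ o = none := (Finset.mem_filter.1 hp).2
  cases o with
  | none => exact absurd rfl ho
  | some x => rw [st6_xp_apply_some]; rfl

lemma st6_psi_tmon (μ : ℕ+ →₀ ℕ) :
    psi K (monomial (tExp μ) (1 : K) : PL K (Option X)) = 1 := by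
  rw [st6_psi_monomial, st6_xp_tExp, monomial_zero', C_1]

lemma st6_coeff_mComp {Y : Type*} (ν : ℕ+ →₀ ℕ) (f : PL K Y) (m : (Y × ℕ+) →₀ ℕ) :
    coeff m (mComp K ν f) = if placeDeg m = ν then coeff m f else 0 := by
  classical
  rw [mComp, coeff_sum]
  simp only [coeff_monomial]
  rw [Finset.sum_ite_eq' (f.support.filter (fun m => placeDeg m = ν)) m (fun m' => coeff m' f)]
  by_cases h1 : placeDeg m = ν <;> by_cases h2 : coeff m f = 0 <;>
    simp [Finset.mem_filter, MvPolynomial.mem_support_iff, h1, h2]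

lemma st6_sum_mComp {Y : Type*} (f : PL K Y) :
    ∑ ν ∈ f.support.image placeDeg, mComp K ν f = f := by
  classical
  simp only [mComp]
  rw [Finset.sum_fiberwise_of_maps_to (fun m hm => Finset.mem_image_of_mem _ hm)]
  exact support_sum_monomial_coeff f

lemma st6_mComp_homog {Y : Type*} (ν : ℕ+ →₀ ℕ) (f : PL K Y) :
    IsMultiHomog K ν (mComp K ν f) := by
  intro m hm
  rw [MvPolynomial.mem_support_iff, st6_coeff_mComp] at hm
  by_contra h
  rw [if_neg h] at hm
  exact hm rfl

lemma st6_homog_zero {Y : Type*} (ν : ℕ+ →₀ ℕ) : IsMultiHomog K ν (0 : PL K Y) := by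
  intro m hm
  simp at hm

lemma st6_homog_add {Y : Type*} {ν : ℕ+ →₀ ℕ} {p q : PL K Y}
    (hp : IsMultiHomog K ν p) (hq : IsMultiHomog K ν q) : IsMultiHomog K ν (p + q) := by
  classical
  intro m hm
  rcases Finset.mem_union.1 (MvPolynomial.support_add hm) with h | h
  exacts [hp m h, hq m h]

lemma st6_homog_sub {Y : Type*} {ν : ℕ+ →₀ ℕ} {p q : PL K Y}
    (hp : IsMultiHomog K ν p) (hq : IsMultiHomog K ν q) : IsMultiHomog K ν (p - q) := by
  classical
  intro m hm
  rcases Finset.mem_union.1 (MvPolynomial.support_sub _ p q hm) with h | h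
  exacts [hp m h, hq m h]

lemma st6_homog_sum {Y ι : Type*} {ν : ℕ+ →₀ ℕ} {s : Finset ι} {F : ι → PL K Y}
    (h : ∀ i ∈ s, IsMultiHomog K ν (F i)) : IsMultiHomog K ν (∑ i ∈ s, F i) :=
  Finset.sum_induction F (IsMultiHomog K ν) (fun _ _ => st6_homog_add)
    (st6_homog_zero ν) h

lemma st6_homog_monomial_mul {Y : Type*} {ν : ℕ+ →₀ ℕ} {p : PL K Y}
    (hp : IsMultiHomog K ν p) (u : (Y × ℕ+) →₀ ℕ) (c : K) :
    IsMultiHomog K (placeDeg u + ν) (monomial u c * p) := by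
  intro m hm
  rw [MvPolynomial.mem_support_iff, coeff_monomial_mul'] at hm
  split_ifs at hm with h
  · have h2 : coeff (m - u) p ≠ 0 := fun h0 => hm (by rw [h0, mul_zero])
    have h3 := hp _ (MvPolynomial.mem_support_iff.2 h2)
    rw [st6_placeDeg_sub_add h, h3]
  · exact absurd rfl hm

lemma st6_homog_tmon_mul {τ ν : ℕ+ →₀ ℕ} {p : PL K (Option X)}
    (hp : IsMultiHomog K ν p) :
    IsMultiHomog K (τ + ν) (monomial (tExp τ) (1 : K) * p) := by
  have h := st6_homog_monomial_mul hp (tExp τ) (1 : K)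
  rwa [st6_placeDeg_tExp] at h

lemma st6_homog_psi_eq_zero {ρ : ℕ+ →₀ ℕ} {r : PL K (Option X)}
    (hr : IsMultiHomog K ρ r) (h0 : psi K r = 0) : r = 0 := by
  classical
  by_contra hne
  obtain ⟨m0, hm0⟩ := MvPolynomial.support_nonempty.2 hne
  have hpsi : psi K r = ∑ m ∈ r.support, monomial (st6_xp m) (coeff m r) := by
    conv_lhs => rw [← support_sum_monomial_coeff r]
    rw [map_sum]
    exact Finset.sum_congr rfl fun m _ => st6_psi_monomial m _
  have hc : coeff (st6_xp m0) (psi K r) = coeff m0 r := by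
    rw [hpsi, coeff_sum]
    simp only [coeff_monomial]
    rw [Finset.sum_eq_single m0]
    · rw [if_pos rfl]
    · intro m hm hne'
      rw [if_neg]
      intro hx
      apply hne'
      have h1 : placeDeg (st6_xp m) + st6_td m = ρ := by
        rw [← st6_placeDeg_eq]; exact hr m hm
      have h2 : placeDeg (st6_xp m0) + st6_td m0 = ρ := by
        rw [← st6_placeDeg_eq]; exact hr m0 hm0
      have htd : st6_td m = st6_td m0 := by
        have h3 := h1.trans h2.symm
        rw [hx] at h3
        exact add_left_cancel h3
      calc m = st6_xp m + tExp (st6_td m) := (st6_xp_add_tExp m).symm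
        _ = st6_xp m0 + tExp (st6_td m0) := by rw [hx, htd]
        _ = m0 := st6_xp_add_tExp m0
    · intro h; exact absurd hm0 h
  rw [h0, coeff_zero] at hc
  exact MvPolynomial.mem_support_iff.1 hm0 hc.symm

lemma st6_shift_tmon (k : ℕ) (μ : ℕ+ →₀ ℕ) :
    shift K k (monomial (tExp μ) (1 : K) : PL K (Option X)) =
      monomial (tExp (Finsupp.mapDomain
        (fun j : ℕ+ => (⟨(j : ℕ) + k, Nat.add_pos_left j.2 k⟩ : ℕ+)) μ)) (1 : K) := by
  rw [shift, rename_monomial]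
  congr 1
  rw [tExp, tExp, ← Finsupp.mapDomain_comp]
  exact congrArg _ (Finsupp.mapDomain_comp (v := μ)
    (f := fun j : ℕ+ => (⟨(j : ℕ) + k, Nat.add_pos_left j.2 k⟩ : ℕ+)) (g := fun k => ((none : Option X), k)))

lemma st6_shift_zero {Y : Type*} (f : PL K Y) : shift K 0 f = f := by
  have h : shiftVar (Y := Y) 0 = id := by
    funext p
    obtain ⟨y, j⟩ := p
    have : (⟨(j : ℕ) + 0, Nat.add_pos_left j.2 0⟩ : ℕ+) = j := Subtype.ext (Nat.add_zero _)
    simp only [shiftVar, this, id]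
  rw [shift, h]
  rw [rename_id]; rfl

lemma st6_mComp_tmon_mul (τ ν : ℕ+ →₀ ℕ) (f : PL K (Option X)) :
    mComp K (τ + ν) (monomial (tExp τ) (1 : K) * f) =
      monomial (tExp τ) (1 : K) * mComp K ν f := by
  apply MvPolynomial.ext
  intro e
  rw [st6_coeff_mComp, coeff_monomial_mul', coeff_monomial_mul']
  simp only [st6_coeff_mComp]
  by_cases hle : tExp τ ≤ e
  · rw [if_pos hle, if_pos hle, one_mul, one_mul]
    have key : placeDeg e = τ + ν ↔ placeDeg (e - tExp τ) = ν := by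
      rw [st6_placeDeg_sub_add hle, st6_placeDeg_tExp]
      exact ⟨fun h => add_left_cancel h, fun h => by rw [h]⟩
    by_cases hd : placeDeg (e - tExp τ) = ν
    · rw [if_pos hd, if_pos (key.2 hd)]
    · rw [if_neg hd, if_neg (fun h => hd (key.1 h))]
  · rw [if_neg hle, if_neg hle, ite_self]

end Stmt6Aux

/-- For every multigraded ℕ-ideal `J ⊆ P̄`,
`Sat(J) = {f ∈ P̄ : (∏_k t(k)^{μ_k})·f ∈ J for some finitely supported multidegree μ}`. -/
theorem statement_6 (K : Type*) [Field K] (X : Type*) [Countable X]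
    (J : Ideal (PL K (Option X))) (hN : IsNIdeal K J) (hMG : IsMultiGraded K J) :
    ∀ f : PL K (Option X),
      f ∈ SatP K J ↔ ∃ μ : ℕ+ →₀ ℕ, MvPolynomial.monomial (tExp μ) (1 : K) * f ∈ J := by
  open MvPolynomial in
  intro f
  constructor
  · intro hf
    rw [SatP, nspan] at hf
    refine Submodule.span_induction
      (p := fun g _ => ∃ μ : ℕ+ →₀ ℕ, monomial (tExp μ) (1 : K) * g ∈ J)
      ?_ ?_ ?_ ?_ hf
    · rintro g ⟨k, f0, ⟨⟨μ, hμ⟩, h, hJ, hpsi⟩, rfl⟩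
      set σ := topDeg K h with hσdef
      set q : PL K (Option X) :=
        ∑ ν ∈ h.support.image placeDeg, monomial (tExp (σ - ν)) (1 : K) * mComp K ν h
        with hqdef
      have hqJ : q ∈ J :=
        Submodule.sum_mem _ fun ν _ => Ideal.mul_mem_left _ _ (hMG h hJ ν)
      have hqhom : IsMultiHomog K σ q := by
        apply st6_homog_sum
        intro ν hν
        obtain ⟨m, hm, rfl⟩ := Finset.mem_image.1 hν
        have hle : placeDeg m ≤ σ := Finset.le_sup hm
        have h1 := st6_homog_tmon_mul (τ := σ - placeDeg m)
          (st6_mComp_homog (K := K) (placeDeg m) h)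
        rwa [tsub_add_cancel_of_le hle] at h1
      have hqpsi : psi K q = psi K h := by
        have h2 : psi K q = ∑ ν ∈ h.support.image placeDeg, psi K (mComp K ν h) := by
          rw [hqdef, map_sum]
          refine Finset.sum_congr rfl fun ν _ => ?_
          rw [map_mul, st6_psi_tmon, one_mul]
        rw [h2, ← map_sum, st6_sum_mComp]
      have heq : monomial (tExp σ) (1 : K) * f0 = monomial (tExp μ) (1 : K) * q := by
        have hhom1 : IsMultiHomog K (σ + μ) (monomial (tExp σ) (1 : K) * f0) :=
          st6_homog_tmon_mul hμ
        have hhom2 : IsMultiHomog K (σ + μ) (monomial (tExp μ) (1 : K) * q) := by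
          have h3 := st6_homog_tmon_mul (τ := μ) hqhom
          rwa [add_comm] at h3
        have hpsieq :
            psi K (monomial (tExp σ) (1 : K) * f0 - monomial (tExp μ) (1 : K) * q) = 0 := by
          rw [map_sub, map_mul, map_mul, st6_psi_tmon, st6_psi_tmon, one_mul, one_mul,
            hpsi, hqpsi, sub_self]
        exact sub_eq_zero.mp (st6_homog_psi_eq_zero (st6_homog_sub hhom1 hhom2) hpsieq)
      have hmem : monomial (tExp σ) (1 : K) * f0 ∈ J := by
        rw [heq]; exact Ideal.mul_mem_left _ _ hqJ
      refine ⟨Finsupp.mapDomain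
        (fun j : ℕ+ => (⟨(j : ℕ) + k, Nat.add_pos_left j.2 k⟩ : ℕ+)) σ, ?_⟩
      have h4 := hN k _ hmem
      rw [map_mul, st6_shift_tmon] at h4
      exact h4
    · exact ⟨0, by rw [mul_zero]; exact J.zero_mem⟩
    · rintro x y hx hy ⟨μ1, h1⟩ ⟨μ2, h2⟩
      refine ⟨μ1 + μ2, ?_⟩
      have hm : (monomial (tExp (μ1 + μ2)) (1 : K) : PL K (Option X)) =
          monomial (tExp μ1) (1 : K) * monomial (tExp μ2) (1 : K) := by
        rw [monomial_mul, st6_tExp_add, one_mul]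
      have h5 : (monomial (tExp (μ1 + μ2)) (1 : K) : PL K (Option X)) * (x + y) =
          monomial (tExp μ2) (1 : K) * (monomial (tExp μ1) (1 : K) * x) +
            monomial (tExp μ1) (1 : K) * (monomial (tExp μ2) (1 : K) * y) := by
        rw [hm]; ring
      rw [h5]
      exact J.add_mem (Ideal.mul_mem_left _ _ h1) (Ideal.mul_mem_left _ _ h2)
    · rintro a x hx ⟨μ, h1⟩
      refine ⟨μ, ?_⟩
      have h6 : (monomial (tExp μ) (1 : K) : PL K (Option X)) * (a • x) =
          a • (monomial (tExp μ) (1 : K) * x) := by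
        rw [smul_eq_mul, smul_eq_mul]; ring
      rw [h6]
      exact Submodule.smul_mem _ a h1
  · rintro ⟨μ, hμ⟩
    rw [SatP, nspan]
    have hsum : f = ∑ ν ∈ f.support.image placeDeg, mComp K ν f := (st6_sum_mComp f).symm
    rw [hsum]
    apply Submodule.sum_mem
    intro ν _
    apply Ideal.subset_span
    refine ⟨0, mComp K ν f, ⟨⟨ν, st6_mComp_homog ν f⟩, ?_⟩, (st6_shift_zero _).symm⟩
    refine ⟨monomial (tExp μ) (1 : K) * mComp K ν f, ?_, ?_⟩
    · have h7 := hMG _ hμ (μ + ν)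
      rwa [st6_mComp_tmon_mul] at h7
    · rw [map_mul, st6_psi_tmon, one_mul]
end

section
/- Let I be a saturated graded two-sided ideal of F̄ with C ⊆ I, and let J = ⟨ῑ(I)⟩_ℕ ⊆ P̄ be its letterplace analogue (so D ⊆ J). Then J is an L-saturated letterplace ideal. -/
noncomputable section AuxLemmas

open Finsupp MvPolynomial MonoidAlgebra

variable {K : Type*} [Field K] {Y : Type*}

lemma wordExpAux_append (n : ℕ) (l₁ l₂ : List Y) :
    wordExpAux n (l₁ ++ l₂) = wordExpAux n l₁ + wordExpAux (n + l₁.length) l₂ := by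
  induction l₁ generalizing n with
  | nil => simp [wordExpAux]
  | cons y l ih =>
    show wordExpAux n (y :: (l ++ l₂)) = _
    rw [wordExpAux, ih (n + 1), wordExpAux]
    rw [add_assoc, List.length_cons]
    have e : n + (1 + l.length) = n + (l.length + 1) := by omega
    rw [e]
    exact (add_assoc _ _ _).symm

lemma shiftMon_wordExpAux (k n : ℕ) (l : List Y) :
    shiftMon k (wordExpAux n l) = wordExpAux (n + k) l := by
  induction l generalizing n with
  | nil => simp [wordExpAux, shiftMon]
  | cons y l ih =>
    rw [wordExpAux, shiftMon, Finsupp.mapDomain_add, Finsupp.mapDomain_single]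
    rw [show Finsupp.mapDomain (shiftVar k) (wordExpAux (n + 1) l) = wordExpAux (n + 1 + k) l
      from ih (n + 1)]
    have e1 : shiftVar k (y, (⟨n + 1, Nat.succ_pos n⟩ : ℕ+)) = (y, ⟨n + k + 1, Nat.succ_pos _⟩) :=
      Prod.ext rfl (Subtype.ext (show (n + 1 : ℕ) + k = n + k + 1 by omega))
    have e2 : n + 1 + k = n + k + 1 := by omega
    rw [e1, e2, wordExpAux]

open scoped Classical in
lemma wordExpAux_apply (n : ℕ) (l : List Y) (y : Y) (a : ℕ) (ha : 0 < a) :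
    wordExpAux n l (y, ⟨a, ha⟩) = if l[a - (n + 1)]? = some y ∧ n < a then 1 else 0 := by
  induction l generalizing n with
  | nil => simp [wordExpAux]
  | cons z l ih =>
    rw [wordExpAux, Finsupp.add_apply, ih, Finsupp.single_apply]
    have hval : (((z, (⟨n + 1, Nat.succ_pos n⟩ : ℕ+)) : Y × ℕ+) = (y, ⟨a, ha⟩)) ↔
        (z = y ∧ n + 1 = a) := by
      constructor
      · intro he
        exact ⟨congrArg Prod.fst he, congrArg (fun p : Y × ℕ+ => (p.2 : ℕ)) he⟩
      · rintro ⟨rfl, he⟩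
        exact Prod.ext rfl (Subtype.ext he)
    simp only [hval]
    rcases Nat.lt_trichotomy a (n + 1) with h | h | h
    · have hc1 : ¬(z = y ∧ n + 1 = a) := by rintro ⟨-, h2⟩; omega
      have hc2 : ¬(l[a - (n + 1 + 1)]? = some y ∧ n + 1 < a) := by rintro ⟨-, h2⟩; omega
      have hc3 : ¬((z :: l)[a - (n + 1)]? = some y ∧ n < a) := by rintro ⟨-, h2⟩; omega
      rw [if_neg hc1, if_neg hc2, if_neg hc3, add_zero]
    · have hc2 : ¬(l[a - (n + 1 + 1)]? = some y ∧ n + 1 < a) := by rintro ⟨-, h2⟩; omega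
      rw [if_neg hc2, add_zero]
      rw [show a - (n + 1) = 0 from by omega, List.getElem?_cons_zero]
      by_cases hzy : z = y
      · rw [if_pos ⟨hzy, h.symm⟩, if_pos ⟨by rw [hzy], by omega⟩]
      · have hc1 : ¬(z = y ∧ n + 1 = a) := by rintro ⟨h1, -⟩; exact hzy h1
        have hc3 : ¬((some z : Option Y) = some y ∧ n < a) := by
          rintro ⟨h1, -⟩; exact hzy (Option.some.inj h1)
        rw [if_neg hc1, if_neg hc3]
    · have hc1 : ¬(z = y ∧ n + 1 = a) := by rintro ⟨-, h2⟩; omega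
      rw [if_neg hc1, zero_add]
      rw [show a - (n + 1) = (a - (n + 2)) + 1 from by omega, List.getElem?_cons_succ,
        show a - (n + 1 + 1) = a - (n + 2) from by omega]
      exact if_congr (and_congr_right fun _ => by constructor <;> (intro; omega)) rfl rfl

lemma wordExpAux_inj {n : ℕ} {l l' : List Y} (h : wordExpAux n l = wordExpAux n l') :
    l = l' := by
  apply List.ext_getElem?
  intro i
  have key : ∀ y : Y, l[i]? = some y ↔ l'[i]? = some y := by
    intro y
    have hval : wordExpAux n l (y, (⟨n + i + 1, Nat.succ_pos _⟩ : ℕ+)) =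
        wordExpAux n l' (y, (⟨n + i + 1, Nat.succ_pos _⟩ : ℕ+)) := by rw [h]
    rw [wordExpAux_apply, wordExpAux_apply] at hval
    rw [show n + i + 1 - (n + 1) = i from by omega] at hval
    have hlt : n < n + i + 1 := by omega
    constructor
    · intro hy
      by_contra hy'
      rw [if_pos ⟨hy, hlt⟩, if_neg (by rintro ⟨hs, -⟩; exact hy' hs)] at hval
      exact one_ne_zero hval
    · intro hy
      by_contra hy'
      rw [if_neg (by rintro ⟨hs, -⟩; exact hy' hs), if_pos ⟨hy, hlt⟩] at hval
      exact zero_ne_one hval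
  rcases h1 : l[i]? with - | y
  · rcases h2 : l'[i]? with - | y'
    · rfl
    · exact absurd ((key y').mpr h2) (by rw [h1]; simp)
  · rw [(key y).mp h1]

lemma wordExp_inj : Function.Injective (wordExp (Y := Y)) := by
  intro w w' h
  exact FreeMonoid.toList.injective (wordExpAux_inj h)

end AuxLemmas

noncomputable section Aux2

open Finsupp MvPolynomial MonoidAlgebra

variable {K : Type*} [Field K] {Y : Type*}

lemma iota_eq_mapDomain (f : FA K Y) :
    iota K f = AddMonoidAlgebra.ofCoeff (Finsupp.mapDomain wordExp f.coeff) := by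
  unfold iota
  rw [Finsupp.mapDomain, AddMonoidAlgebra.ofCoeff_finsuppSum]
  rfl

/-- `ι` as a linear map. -/
def iotaL (K : Type*) [Field K] (Y : Type*) : FA K Y →ₗ[K] PL K Y :=
  Finsupp.lsum K (fun w => MvPolynomial.monomial (wordExp w)) ∘ₗ
    (MonoidAlgebra.coeffLinearEquiv K).toLinearMap

lemma iota_eq_iotaL (f : FA K Y) : iota K f = iotaL K Y f := rfl

lemma iota_single (w : FreeMonoid Y) (c : K) :
    iota K (MonoidAlgebra.single w c) = MvPolynomial.monomial (wordExp w) c := by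
  rw [iota_eq_mapDomain, MonoidAlgebra.coeff_single, Finsupp.mapDomain_single]; rfl

lemma coeff_iota (f : FA K Y) (w : FreeMonoid Y) :
    MvPolynomial.coeff (wordExp w) (iota K f) = f.coeff w := by
  rw [iota_eq_mapDomain]
  exact Finsupp.mapDomain_apply wordExp_inj f.coeff w

open Classical in
lemma support_iota (f : FA K Y) :
    (iota K f).support = f.coeff.support.image wordExp := by
  classical
  rw [iota_eq_mapDomain]
  exact Finsupp.mapDomain_support_of_injective wordExp_inj f.coeff

open Classical in
/-- The left inverse of `ι`, sending non-word monomials to zero. -/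
def rho (K : Type*) [Field K] (Y : Type*) : PL K Y →ₗ[K] FA K Y :=
  (MonoidAlgebra.coeffLinearEquiv K).symm.toLinearMap ∘ₗ (Finsupp.lsum K fun m =>
    if h : ∃ w : FreeMonoid Y, wordExp w = m then Finsupp.lsingle h.choose else 0) ∘ₗ
    (AddMonoidAlgebra.coeffLinearEquiv K).toLinearMap

open Classical in
lemma rho_monomial (a : (Y × ℕ+) →₀ ℕ) (c : K) :
    rho K Y (MvPolynomial.monomial a c) =
      if h : ∃ w : FreeMonoid Y, wordExp w = a then MonoidAlgebra.single h.choose c else 0 := by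
  have h1 : rho K Y (MvPolynomial.monomial a c) =
      (MonoidAlgebra.coeffLinearEquiv K).symm ((if h : ∃ w : FreeMonoid Y, wordExp w = a then
        (Finsupp.lsingle h.choose : K →ₗ[K] FreeMonoid Y →₀ K) else 0) c) := by
    show (MonoidAlgebra.coeffLinearEquiv K).symm (Finsupp.lsum K _ (Finsupp.single a c)) = _
    rw [Finsupp.lsum_single]
  rw [h1]
  split_ifs with h
  · rfl
  · exact map_zero _

lemma rho_monomial_wordExp (w : FreeMonoid Y) (c : K) :
    rho K Y (MvPolynomial.monomial (wordExp w) c) = MonoidAlgebra.single w c := by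
  classical
  rw [rho_monomial]
  have h : ∃ w' : FreeMonoid Y, wordExp w' = wordExp w := ⟨w, rfl⟩
  rw [dif_pos h]
  congr 1
  exact wordExp_inj h.choose_spec

lemma rho_monomial_of_not (a : (Y × ℕ+) →₀ ℕ) (c : K)
    (h : ¬∃ w : FreeMonoid Y, wordExp w = a) :
    rho K Y (MvPolynomial.monomial a c) = 0 := by
  classical
  rw [rho_monomial, dif_neg h]

lemma rho_iota (f : FA K Y) : rho K Y (iota K f) = f := by
  rw [iota_eq_iotaL]
  have : iotaL K Y f = f.coeff.sum fun w c => MvPolynomial.monomial (wordExp w) c := rfl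
  rw [this, map_finsuppSum]
  have : (f.coeff.sum fun w c => rho K Y (MvPolynomial.monomial (wordExp w) c)) =
      f.coeff.sum fun w c => MonoidAlgebra.single w c := by
    apply Finsupp.sum_congr
    intro w _
    rw [rho_monomial_wordExp]
  rw [this, MonoidAlgebra.sum_coeff_single]

/-- Decomposition into homogeneous components. -/
lemma sum_homComp (g : FA K Y) :
    ∑ l ∈ Finset.range (degF K g + 1), homComp K l g = g := by
  classical
  unfold homComp
  have hmap : ∀ w ∈ g.coeff.support, FreeMonoid.length w ∈ Finset.range (degF K g + 1) := by
    intro w hw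
    refine Finset.mem_range.mpr (Nat.lt_succ_of_le ?_)
    unfold degF
    exact Finset.le_sup hw
  rw [Finset.sum_fiberwise_of_maps_to hmap]
  conv_rhs => rw [← MonoidAlgebra.sum_coeff_single g]
  rfl

lemma isHomog_homComp (g : FA K Y) (l : ℕ) : IsHomog K l (homComp K l g) := by
  classical
  intro w hw
  unfold homComp at hw
  rw [MonoidAlgebra.coeff_sum] at hw
  obtain ⟨w', hw', hmem⟩ := Finsupp.mem_support_finset_sum w hw
  have hsub := Finsupp.support_single_subset hmem
  rw [Finset.mem_singleton] at hsub
  subst hsub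
  exact (Finset.mem_filter.mp hw').2

end Aux2

noncomputable section Aux3

open Finsupp MvPolynomial MonoidAlgebra

variable {K : Type*} [Field K] {Y : Type*}

/-- The key combinatorial lemma: if `m · (k·ι(w₀))` is a word monomial for some word `w₀` of
length `l`, then `m · (k·ι(w))` is a word monomial `ι(u w v)` uniformly for all `w` of
length `l`. -/
lemma crux {m : (Y × ℕ+) →₀ ℕ} {k : ℕ} {w₀ w' : List Y}
    (h : m + wordExpAux k w₀ = wordExpAux 0 w') :
    ∃ u v : List Y, ∀ w : List Y, w.length = w₀.length →
      m + wordExpAux k w = wordExpAux 0 ((u ++ w) ++ v) := by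
  classical
  rcases Nat.eq_zero_or_pos w₀.length with hl | hl
  · have hw0 : w₀ = [] := List.length_eq_zero_iff.mp hl
    subst hw0
    refine ⟨w', [], fun w hw => ?_⟩
    rw [List.length_eq_zero_iff.mp hw]
    simp only [List.append_nil]
    simpa [wordExpAux] using h
  · set l := w₀.length with hldef
    have claim1 : ∀ i, i < l → w'[k + i]? = w₀[i]? := by
      intro i hi
      have hy : w₀[i]? = some (w₀[i]'hi) := List.getElem?_eq_getElem hi
      have hev : m (w₀[i]'hi, (⟨k + i + 1, Nat.succ_pos _⟩ : ℕ+)) +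
          wordExpAux k w₀ (w₀[i]'hi, (⟨k + i + 1, Nat.succ_pos _⟩ : ℕ+)) =
          wordExpAux 0 w' (w₀[i]'hi, (⟨k + i + 1, Nat.succ_pos _⟩ : ℕ+)) :=
        DFunLike.congr_fun h _
      rw [wordExpAux_apply, wordExpAux_apply,
        show k + i + 1 - (k + 1) = i from by omega,
        show k + i + 1 - (0 + 1) = k + i from by omega,
        if_pos ⟨hy, by omega⟩] at hev
      by_cases hc : w'[k + i]? = some (w₀[i]'hi)
      · rw [hc, hy]
      · rw [if_neg (by rintro ⟨hs, -⟩; exact hc hs)] at hev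
        omega
    have claim2 : k + l ≤ w'.length := by
      have h1 := claim1 (l - 1) (by omega)
      have h2 : w₀[l - 1]? = some (w₀[l - 1]'(by omega)) := List.getElem?_eq_getElem (by omega)
      rw [h2] at h1
      obtain ⟨h3, -⟩ := List.getElem?_eq_some_iff.mp h1
      omega
    set u := w'.take k with hu
    set v := w'.drop (k + l) with hv
    have claim3 : w' = (u ++ w₀) ++ v := by
      have h1 : w'.take (k + l) ++ w'.drop (k + l) = w' := List.take_append_drop _ _
      have h2 : w'.take (k + l) = u ++ w₀ := by
        rw [List.take_add]
        congr 1
        apply List.ext_getElem?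
        intro i
        rcases Nat.lt_or_ge i l with hi | hi
        · rw [List.getElem?_take_of_lt hi, List.getElem?_drop, claim1 i hi]
        · rw [List.getElem?_eq_none (l := w'.drop k |>.take l) (by simp; omega),
            List.getElem?_eq_none (by omega)]
      rw [← h2, h1]
    have hulen : u.length = k := by
      rw [hu, List.length_take]
      omega
    have claim5 : m = wordExpAux 0 u + wordExpAux (k + l) v := by
      have e := h
      rw [claim3, wordExpAux_append, wordExpAux_append, hulen, zero_add, zero_add,
        List.length_append, hulen, ← hldef] at e
      have e2 : m + wordExpAux k w₀ =
          (wordExpAux 0 u + wordExpAux (k + l) v) + wordExpAux k w₀ := by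
        rw [e]; abel
      exact add_right_cancel e2
    refine ⟨u, v, fun w hw => ?_⟩
    rw [claim5, wordExpAux_append, wordExpAux_append, hulen, zero_add, zero_add,
      List.length_append, hulen, hw]
    abel

end Aux3

noncomputable section Aux4

open Finsupp MvPolynomial MonoidAlgebra

variable {K : Type*} [Field K] {Y : Type*}

lemma single_mul_mul_single (u v : FreeMonoid Y) (b b' : K) (h : FA K Y) :
    MonoidAlgebra.single u b * h * MonoidAlgebra.single v b' =
      h.coeff.sum fun w c => MonoidAlgebra.single (u * w * v) (b * c * b') := by
  conv_lhs => rw [← MonoidAlgebra.sum_coeff_single h]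
  rw [Finsupp.sum, Finset.mul_sum, Finset.sum_mul, Finsupp.sum]
  exact Finset.sum_congr rfl fun w _ => by
    rw [MonoidAlgebra.single_mul_single, MonoidAlgebra.single_mul_single]

lemma mul_single_right (h : FA K Y) (a : FreeMonoid Y) (b : K) :
    h * MonoidAlgebra.single a b = h.coeff.sum fun w c => MonoidAlgebra.single (w * a) (c * b) := by
  conv_lhs => rw [← MonoidAlgebra.sum_coeff_single h]
  rw [Finsupp.sum, Finset.sum_mul, Finsupp.sum]
  exact Finset.sum_congr rfl fun w _ => by rw [MonoidAlgebra.single_mul_single]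

lemma shift_monomial (k : ℕ) (e : (Y × ℕ+) →₀ ℕ) (c : K) :
    shift K k (MvPolynomial.monomial e c : PL K Y) = MvPolynomial.monomial (shiftMon k e) c := by
  rw [shift, MvPolynomial.rename_monomial]
  rfl

lemma wordExp_def' (w : FreeMonoid Y) : wordExp w = wordExpAux 0 w.toList := rfl

lemma iota_eq_sum (g : FA K Y) :
    iota K g = g.coeff.sum fun w c => MvPolynomial.monomial (wordExp w) c := rfl

lemma shift_iota (k : ℕ) (g : FA K Y) :
    shift K k (iota K g) = g.coeff.sum fun w c => MvPolynomial.monomial (wordExpAux k w.toList) c := by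
  rw [iota_eq_sum, map_finsuppSum]
  apply Finsupp.sum_congr
  intro w _
  rw [shift_monomial]
  have h2 : shiftMon k (wordExp w) = wordExpAux k (FreeMonoid.toList w) := by
    rw [wordExp_def']
    have := shiftMon_wordExpAux k 0 w.toList
    rwa [zero_add] at this
  rw [h2]

lemma wordExp_def (w : FreeMonoid Y) : wordExp w = wordExpAux 0 w.toList := rfl

lemma toList_mul_mul (u v : List Y) (w : FreeMonoid Y) :
    FreeMonoid.toList (FreeMonoid.ofList u * w * FreeMonoid.ofList v) =
      (u ++ FreeMonoid.toList w) ++ v := by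
  simp

lemma rho_monomial_mul_shift_iota_mem (I : TwoSidedIdeal (FA K Y)) {g : FA K Y}
    (hg : g ∈ I) {l : ℕ} (hhom : IsHomog K l g) (m : (Y × ℕ+) →₀ ℕ) (c : K) (k : ℕ) :
    rho K Y (MvPolynomial.monomial m c * shift K k (iota K g)) ∈ I := by
  classical
  have expand : MvPolynomial.monomial m c * shift K k (iota K g) =
      g.coeff.sum fun w c' => MvPolynomial.monomial (m + wordExpAux k w.toList) (c * c') := by
    rw [shift_iota, Finsupp.mul_sum]
    apply Finsupp.sum_congr
    intro w _
    rw [MvPolynomial.monomial_mul]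
  rw [expand, map_finsuppSum]
  by_cases hex : ∃ w' w₀ : List Y, w₀.length = l ∧ m + wordExpAux k w₀ = wordExpAux 0 w'
  · obtain ⟨w', w₀, hlen, heq⟩ := hex
    obtain ⟨u, v, huv⟩ := crux heq
    have hterm : ∀ w ∈ g.coeff.support,
        rho K Y (MvPolynomial.monomial (m + wordExpAux k w.toList) (c * g.coeff w)) =
          MonoidAlgebra.single (FreeMonoid.ofList u * w * FreeMonoid.ofList v) (c * g.coeff w) := by
      intro w hw
      have hlw : w.toList.length = w₀.length := by
        rw [hlen]
        exact hhom w hw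
      have hkey : m + wordExpAux k w.toList =
          wordExp (FreeMonoid.ofList u * w * FreeMonoid.ofList v) := by
        rw [wordExp_def, toList_mul_mul]
        exact huv w.toList hlw
      rw [hkey, rho_monomial_wordExp]
    have hsum : (g.coeff.sum fun w c' =>
        rho K Y (MvPolynomial.monomial (m + wordExpAux k w.toList) (c * c'))) =
        MonoidAlgebra.single (FreeMonoid.ofList u) c * g * MonoidAlgebra.single (FreeMonoid.ofList v) 1 := by
      rw [single_mul_mul_single]
      apply Finsupp.sum_congr
      intro w hw
      rw [hterm w hw, mul_one]
    rw [hsum]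
    exact I.mul_mem_right _ _ (I.mul_mem_left _ _ hg)
  · have hzero : ∀ w ∈ g.coeff.support,
        rho K Y (MvPolynomial.monomial (m + wordExpAux k w.toList) (c * g.coeff w)) = 0 := by
      intro w hw
      apply rho_monomial_of_not
      rintro ⟨w'', hw''⟩
      exact hex ⟨w''.toList, w.toList, hhom w hw, hw''.symm⟩
    rw [Finsupp.sum, Finset.sum_eq_zero hzero]
    exact zero_mem I

lemma rho_monomial_mul_shift_iota_mem' (I : TwoSidedIdeal (FA K Y)) (hGr : IsGradedF K I)
    {g : FA K Y} (hg : g ∈ I) (m : (Y × ℕ+) →₀ ℕ) (c : K) (k : ℕ) :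
    rho K Y (MvPolynomial.monomial m c * shift K k (iota K g)) ∈ I := by
  have h1 : MvPolynomial.monomial m c * shift K k (iota K g) =
      ∑ l ∈ Finset.range (degF K g + 1),
        MvPolynomial.monomial m c * shift K k (iota K (homComp K l g)) := by
    conv_lhs => rw [← sum_homComp (K := K) g]
    rw [iota_eq_iotaL, map_sum, map_sum, Finset.mul_sum]
    simp only [iota_eq_iotaL]
  rw [h1, map_sum]
  exact sum_mem fun l _ =>
    rho_monomial_mul_shift_iota_mem I (hGr g hg l) (isHomog_homComp g l) m c k

lemma shift_shift (k k' : ℕ) (p : PL K Y) : shift K k (shift K k' p) = shift K (k' + k) p := by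
  rw [shift, shift, shift]
  show (MvPolynomial.rename (shiftVar k)) ((MvPolynomial.rename (shiftVar k')) p) = _
  have hc : shiftVar (Y := Y) k ∘ shiftVar k' = shiftVar (k' + k) := by
    funext q
    unfold shiftVar
    exact Prod.ext rfl (Subtype.ext (show ((q.2 : ℕ) + k') + k = (q.2 : ℕ) + (k' + k) by omega))
  rw [MvPolynomial.rename_rename, hc]

lemma shift_zero (p : PL K Y) : shift K 0 p = p := by
  rw [shift]
  have h0 : shiftVar (Y := Y) 0 = id := by
    funext q
    unfold shiftVar
    exact Prod.ext rfl (Subtype.ext (show (q.2 : ℕ) + 0 = (q.2 : ℕ) by omega))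
  rw [h0]
  exact congrArg (fun φ => φ p) MvPolynomial.rename_id

lemma mem_nspan_shift {S : Set (PL K Y)} {f : PL K Y} (hf : f ∈ S) (k : ℕ) :
    shift K k f ∈ nspan K S :=
  Ideal.subset_span ⟨k, f, hf, rfl⟩

lemma mem_nspan_self {S : Set (PL K Y)} {f : PL K Y} (hf : f ∈ S) : f ∈ nspan K S := by
  have := mem_nspan_shift (K := K) hf 0
  rwa [shift_zero] at this

lemma nspan_mono {S T : Set (PL K Y)} (h : S ⊆ T) : nspan K S ≤ nspan K T := by
  apply Ideal.span_mono
  rintro g ⟨k, f, hf, he⟩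
  exact ⟨k, f, h hf, he⟩

lemma isNIdeal_nspan (S : Set (PL K Y)) : IsNIdeal K (nspan K S) := by
  intro k f hf
  have h1 : shift K k f ∈ Ideal.map (shift K k) (nspan K S) :=
    Ideal.mem_map_of_mem _ hf
  rw [nspan, Ideal.map_span] at h1
  refine Ideal.span_le.mpr ?_ h1
  rintro - ⟨q, ⟨k', f', hf', rfl⟩, rfl⟩
  rw [shift_shift]
  exact mem_nspan_shift hf' _

lemma rho_nspan_mem (I : TwoSidedIdeal (FA K Y)) (hGr : IsGradedF K I) {p : PL K Y}
    (hp : p ∈ nspan K (iota K '' (I : Set (FA K Y)))) : rho K Y p ∈ I := by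
  have main : ∀ (m : (Y × ℕ+) →₀ ℕ) (c : K),
      rho K Y (MvPolynomial.monomial m c * p) ∈ I := by
    induction hp using Submodule.span_induction with
    | mem x hx =>
      obtain ⟨k, f, ⟨g, hgI, rfl⟩, rfl⟩ := hx
      intro m c
      exact rho_monomial_mul_shift_iota_mem' I hGr hgI m c k
    | zero =>
      intro m c
      rw [mul_zero, map_zero]
      exact zero_mem I
    | add x y _ _ hx hy =>
      intro m c
      rw [mul_add, map_add]
      exact add_mem (hx m c) (hy m c)
    | smul r x _ hx =>
      intro m c
      rw [smul_eq_mul, ← mul_assoc]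
      rw [MvPolynomial.as_sum (MvPolynomial.monomial m c * r), Finset.sum_mul, map_sum]
      exact sum_mem fun m' _ => hx m' _
  have h1 := main 0 1
  rwa [MvPolynomial.monomial_zero', map_one, one_mul] at h1

lemma mem_of_iota_mem_nspan (I : TwoSidedIdeal (FA K Y)) (hGr : IsGradedF K I) {h : FA K Y}
    (hmem : iota K h ∈ nspan K (iota K '' (I : Set (FA K Y)))) : h ∈ I := by
  have := rho_nspan_mem I hGr hmem
  rwa [rho_iota] at this

end Aux4

noncomputable section Aux5

open Finsupp MvPolynomial MonoidAlgebra

variable {K : Type*} [Field K] {Y : Type*}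

lemma placeDeg_wordExpAux_eq {l l' : List Y} (n : ℕ) (h : l.length = l'.length) :
    placeDeg (wordExpAux n l) = placeDeg (wordExpAux n l') := by
  induction l generalizing l' n with
  | nil =>
    rw [List.length_nil] at h
    rw [(List.length_eq_zero_iff.mp h.symm : l' = [])]
  | cons y l ih =>
    cases l' with
    | nil => simp at h
    | cons y' l'' =>
      rw [wordExpAux, wordExpAux]
      unfold placeDeg
      rw [Finsupp.mapDomain_add, Finsupp.mapDomain_add, Finsupp.mapDomain_single,
        Finsupp.mapDomain_single]
      have hlen : l.length = l''.length := by simpa using h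
      have := ih (n + 1) hlen
      unfold placeDeg at this
      rw [this]

lemma sum_wordExpAux (n : ℕ) (l : List Y) :
    (wordExpAux n l).sum (fun _ e => e) = l.length := by
  induction l generalizing n with
  | nil => simp [wordExpAux]
  | cons y l ih =>
    rw [wordExpAux, Finsupp.sum_add_index' (fun _ => rfl) (fun _ _ _ => rfl),
      Finsupp.sum_single_index rfl, ih (n + 1), List.length_cons]
    omega

lemma placeDeg_sum (m : (Y × ℕ+) →₀ ℕ) :
    (placeDeg m).sum (fun _ e => e) = m.sum (fun _ e => e) := by
  unfold placeDeg
  exact Finsupp.sum_mapDomain_index (fun _ => rfl) (fun _ _ _ => rfl)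

lemma length_eq_of_placeDeg_eq {l l' : List Y}
    (h : placeDeg (wordExpAux 0 l) = placeDeg (wordExpAux 0 l')) : l.length = l'.length := by
  have h1 := congrArg (fun m : ℕ+ →₀ ℕ => m.sum fun _ e => e) h
  simp only [placeDeg_sum, sum_wordExpAux] at h1
  exact h1

lemma isMultiHomog_iota_homog {g : FA K Y} {l : ℕ} (hhom : IsHomog K l g) :
    ∃ μ, IsMultiHomog K μ (iota K g) := by
  classical
  rcases Finset.eq_empty_or_nonempty (iota K g).support with hs | ⟨m0, hm0⟩
  · exact ⟨0, fun m hm => absurd hm (by rw [hs]; exact Finset.notMem_empty m)⟩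
  · refine ⟨placeDeg m0, fun m hm => ?_⟩
    rw [support_iota] at hm0 hm
    obtain ⟨w0, hw0, rfl⟩ := Finset.mem_image.mp hm0
    obtain ⟨w, hw, rfl⟩ := Finset.mem_image.mp hm
    rw [wordExp_def', wordExp_def']
    exact placeDeg_wordExpAux_eq 0 (((hhom w hw).trans (hhom w0 hw0).symm : _))

lemma X_mul_X' (a b : Y × ℕ+) :
    (MvPolynomial.X a : PL K Y) * MvPolynomial.X b =
      MvPolynomial.monomial (Finsupp.single a 1 + Finsupp.single b 1) (1 : K) := by
  rw [MvPolynomial.X, MvPolynomial.X, MvPolynomial.monomial_mul, one_mul]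

lemma wordExp_pair (y y' : Y) :
    wordExp (FreeMonoid.of y * FreeMonoid.of y') =
      Finsupp.single (y, (1 : ℕ+)) 1 + Finsupp.single (y', (2 : ℕ+)) 1 := by
  rw [wordExp_def']
  have ht : FreeMonoid.toList (FreeMonoid.of y * FreeMonoid.of y') = [y, y'] := rfl
  rw [ht, wordExpAux, wordExpAux, wordExpAux, add_zero]
  have e1 : (⟨0 + 1, Nat.succ_pos 0⟩ : ℕ+) = (1 : ℕ+) := by decide
  have e2 : (⟨0 + 1 + 1, Nat.succ_pos _⟩ : ℕ+) = (2 : ℕ+) := by decide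
  rw [e1, e2]

lemma gen_mul_gen (y y' : Y) :
    gen K y * gen K y' = MonoidAlgebra.single (FreeMonoid.of y * FreeMonoid.of y') 1 := by
  unfold gen
  rw [MonoidAlgebra.of_apply, MonoidAlgebra.of_apply, MonoidAlgebra.single_mul_single, one_mul]

end Aux5

noncomputable section Aux6

open Finsupp MvPolynomial MonoidAlgebra

variable {K : Type*} [Field K] {Z : Type*}

/-- Deletion of the letter `t` from words, as a monoid homomorphism. -/
def delT : FreeMonoid (Option Z) →* FreeMonoid (Option Z) :=
  FreeMonoid.lift fun o => o.elim 1 fun x => FreeMonoid.of (some x)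

lemma delT_of_none : delT (FreeMonoid.of (none : Option Z)) = 1 := rfl

lemma delT_of_some (x : Z) : delT (FreeMonoid.of (some x)) = FreeMonoid.of (some x) := rfl

lemma delT_idem (w : FreeMonoid (Option Z)) : delT (delT w) = delT w := by
  induction w using FreeMonoid.inductionOn' with
  | one => simp
  | of_mul b a ih =>
    rw [map_mul, map_mul]
    cases b with
    | none => rw [delT_of_none, map_one, one_mul, one_mul, ih]
    | some x => rw [delT_of_some, ih, delT_of_some]

lemma length_delT_le (w : FreeMonoid (Option Z)) :
    FreeMonoid.length (delT w) ≤ FreeMonoid.length w := by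
  induction w using FreeMonoid.inductionOn' with
  | one => simp
  | of_mul b a ih =>
    rw [map_mul, FreeMonoid.length_mul, FreeMonoid.length_mul, FreeMonoid.length_of]
    cases b with
    | none => rw [delT_of_none, FreeMonoid.length_one]; omega
    | some x => rw [delT_of_some, FreeMonoid.length_of]; omega

lemma phi_single (w : FreeMonoid (Option Z)) (c : K) :
    phi K (MonoidAlgebra.single w c) = MonoidAlgebra.single (delT w) c := by
  unfold phi
  rw [MonoidAlgebra.lift_single]
  have key : (FreeMonoid.lift fun o : Option Z => Option.elim o 1 fun x => gen K (some x)) w =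
      MonoidAlgebra.single (delT w) (1 : K) := by
    induction w using FreeMonoid.inductionOn' with
    | one => rw [map_one, map_one, MonoidAlgebra.one_def]
    | of_mul b a ih =>
      rw [map_mul, map_mul, ih, FreeMonoid.lift_eval_of]
      cases b with
      | none =>
        rw [delT_of_none]
        show (1 : FA K (Option Z)) * _ = _
        rw [one_mul, one_mul]
      | some x =>
        rw [delT_of_some]
        show gen K (some x) * _ = _
        unfold gen
        rw [MonoidAlgebra.of_apply, MonoidAlgebra.single_mul_single, one_mul]
  rw [key, MonoidAlgebra.smul_single', mul_one]

lemma phi_apply_eq (h : FA K (Option Z)) :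
    phi K h = h.coeff.sum fun w c => MonoidAlgebra.single (delT w) c := by
  conv_lhs => rw [← MonoidAlgebra.sum_coeff_single h]
  rw [map_finsuppSum]
  exact Finsupp.sum_congr fun w _ => phi_single w (h.coeff w)

lemma supp_phi (h : FA K (Option Z)) :
    ∀ w ∈ (phi K h).coeff.support, ∃ w' ∈ h.coeff.support, w = delT w' := by
  classical
  intro w hw
  rw [phi_apply_eq, MonoidAlgebra.coeff_finsuppSum] at hw
  obtain ⟨w', hw', hmem⟩ := by
    have := Finsupp.support_sum hw
    rwa [Finset.mem_biUnion] at this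
  have := Finsupp.support_single_subset hmem
  rw [Finset.mem_singleton] at this
  exact ⟨w', hw', this⟩

lemma delT_fixed_phi (h : FA K (Option Z)) :
    ∀ w ∈ (phi K h).coeff.support, delT w = w := by
  intro w hw
  obtain ⟨w', _, rfl⟩ := supp_phi h w hw
  exact delT_idem w'

lemma phi_phi (h : FA K (Option Z)) : phi K (phi K h) = phi K h := by
  conv_lhs => rw [phi_apply_eq h]
  rw [map_finsuppSum]
  conv_rhs => rw [phi_apply_eq h]
  exact Finsupp.sum_congr fun w _ => by rw [phi_single, delT_idem]

lemma tv_eq : tv K (X := Z) = MonoidAlgebra.single (FreeMonoid.of (none : Option Z)) 1 := by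
  unfold tv gen
  rw [MonoidAlgebra.of_apply]

lemma phi_tv : phi K (tv K (X := Z)) = 1 := by
  rw [tv_eq, phi_single, delT_of_none, MonoidAlgebra.one_def]

lemma delT_tpow (j : ℕ) : delT (FreeMonoid.of (none : Option Z) ^ j) = 1 := by
  rw [map_pow, delT_of_none, one_pow]

lemma length_of_pow (y : Z) (j : ℕ) : FreeMonoid.length (FreeMonoid.of y ^ j) = j := by
  induction j with
  | zero => rw [pow_zero, FreeMonoid.length_one]
  | succ n ih => rw [pow_succ, FreeMonoid.length_mul, ih, FreeMonoid.length_of]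

lemma hstarO_eq (g : FA K (Option Z)) :
    hstarO K g = g.coeff.sum fun w c =>
      MonoidAlgebra.single
        (w * FreeMonoid.of (none : Option Z) ^ (degF K g - FreeMonoid.length w)) c := rfl

lemma phi_hstarO (g : FA K (Option Z)) (hfix : ∀ w ∈ g.coeff.support, delT w = w) :
    phi K (hstarO K g) = g := by
  rw [hstarO_eq, map_finsuppSum]
  have : (g.coeff.sum fun w c => phi K (MonoidAlgebra.single
      (w * FreeMonoid.of (none : Option Z) ^ (degF K g - FreeMonoid.length w)) c)) =
      g.coeff.sum fun w c => MonoidAlgebra.single w c := by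
    apply Finsupp.sum_congr
    intro w hw
    rw [phi_single, map_mul, delT_tpow, mul_one, hfix w hw]
  rw [this, MonoidAlgebra.sum_coeff_single]

lemma phi_zero_of_mem_C {g : FA K (Option Z)} (hg : g ∈ Cideal K (X := Z)) : phi K g = 0 := by
  have := TwoSidedIdeal.mem_span_iff.mp hg (TwoSidedIdeal.ker (phi K))
    (fun s hs => (TwoSidedIdeal.mem_ker (phi K)).mpr hs.2)
  exact (TwoSidedIdeal.mem_ker (phi K)).mp this

end Aux6

noncomputable section Aux7

open Finsupp MvPolynomial MonoidAlgebra

variable {K : Type*} [Field K] {Y : Type*} {Z : Type*}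

lemma iota_sub (a b : FA K Y) : iota K (a - b) = iota K a - iota K b := by
  rw [iota_eq_iotaL, iota_eq_iotaL, iota_eq_iotaL, map_sub]

lemma wordExp_mem_support_iota {f : FA K Y} {w : FreeMonoid Y} (hw : w ∈ f.coeff.support) :
    wordExp w ∈ (iota K f).support :=
  MvPolynomial.mem_support_iff.mpr (by rw [coeff_iota]; exact Finsupp.mem_support_iff.mp hw)

lemma exists_of_mem_support_iota {f : FA K Y} {m : (Y × ℕ+) →₀ ℕ}
    (hm : m ∈ (iota K f).support) : ∃ w ∈ f.coeff.support, wordExp w = m := by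
  classical
  rw [support_iota] at hm
  exact Finset.mem_image.mp hm

lemma iota_mul_tv {h : FA K (Option Z)} {l : ℕ} (hhom : IsHomog K l h) :
    iota K (h * tv K) =
      (MvPolynomial.X ((none : Option Z), (⟨l + 1, Nat.succ_pos l⟩ : ℕ+)) : PL K (Option Z)) *
        iota K h := by
  have hmul : h * tv K = h.coeff.sum fun w c =>
      MonoidAlgebra.single (w * FreeMonoid.of (none : Option Z)) c := by
    rw [tv_eq, mul_single_right]
    exact Finsupp.sum_congr fun w _ => by rw [mul_one]
  rw [hmul, iota_eq_iotaL, map_finsuppSum]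
  conv_rhs => rw [iota_eq_sum]
  rw [Finsupp.mul_sum]
  apply Finsupp.sum_congr
  intro w hw
  have e1 : iotaL K (Option Z) (MonoidAlgebra.single (w * FreeMonoid.of (none : Option Z)) (h.coeff w))
      = MvPolynomial.monomial (wordExp (w * FreeMonoid.of (none : Option Z))) (h.coeff w) :=
    iota_single _ _
  rw [e1]
  have e2 : wordExp (w * FreeMonoid.of (none : Option Z)) =
      (Finsupp.single ((none : Option Z), (⟨l + 1, Nat.succ_pos l⟩ : ℕ+)) 1 :
        ((Option Z) × ℕ+) →₀ ℕ) + wordExp w := by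
    rw [wordExp_def',
      show FreeMonoid.toList (w * FreeMonoid.of (none : Option Z)) =
        FreeMonoid.toList w ++ [none] from rfl,
      wordExpAux_append, zero_add]
    have hlw : (FreeMonoid.toList w).length = l := hhom w hw
    rw [hlw, wordExpAux, wordExpAux, add_zero]
    rw [← wordExp_def']
    exact add_comm _ _
  rw [e2, MvPolynomial.X, MvPolynomial.monomial_mul, one_mul]

end Aux7

/-- If `C ⊆ I ⊆ F̄` is a saturated graded two-sided ideal (every homogeneous
`f ∈ I∖C` has `φ(f)^* ∈ I`) and `J = ⟨ῑ(I)⟩_ℕ ⊆ P̄` is its letterplace analogue, then `J` is an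
`L`-saturated letterplace ideal containing `D`. -/
theorem statement_8 (K : Type*) [Field K] (X : Type*) [Countable X]
    (I : TwoSidedIdeal (FA K (Option X))) (hGr : IsGradedF K I) (hC : Cideal K ≤ I)
    (hSat : ∀ f ∈ I, (∃ d, IsHomog K d f) → f ∉ Cideal K → hstarO K (phi K f) ∈ I)
    (J : Ideal (PL K (Option X)))
    (hJ : J = nspan K (iota K '' (I : Set (FA K (Option X))))) :
    IsLPIdeal K J ∧ Did K X ≤ J ∧ IsLSat K J := by
  classical
  subst hJ
  have hNI : IsNIdeal K (nspan K (iota K '' (I : Set (FA K (Option X))))) := isNIdeal_nspan _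
  have hiota_decomp : ∀ g : FA K (Option X), iota K g =
      ∑ l ∈ Finset.range (degF K g + 1), iota K (homComp K l g) := by
    intro g
    rw [iota_eq_iotaL]
    conv_lhs => rw [← sum_homComp (K := K) g]
    rw [map_sum]
    simp only [iota_eq_iotaL]
  have hmemJ_of_memI : ∀ g ∈ I, iota K g ∈ nspan K (iota K '' (I : Set (FA K (Option X)))) :=
    fun g hg => mem_nspan_self ⟨g, hg, rfl⟩
  have hLP : nspan K (iota K '' (I : Set (FA K (Option X)))) =
      nspan K ((nspan K (iota K '' (I : Set (FA K (Option X)))) :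
        Set (PL K (Option X))) ∩ Lset K) := by
    apply le_antisymm
    · apply Ideal.span_le.mpr
      rintro q ⟨k, f, ⟨g, hgI, rfl⟩, rfl⟩
      rw [hiota_decomp g, map_sum]
      apply sum_mem
      intro l _
      have hfL : iota K (homComp K l g) ∈ Lset K :=
        ⟨⟨homComp K l g, rfl⟩, isMultiHomog_iota_homog (isHomog_homComp g l)⟩
      have hfJ2 : iota K (homComp K l g) ∈
          (nspan K (iota K '' (I : Set (FA K (Option X)))) : Set (PL K (Option X))) :=
        hmemJ_of_memI _ (hGr g hgI l)
      exact mem_nspan_shift (Set.mem_inter hfJ2 hfL) k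
    · apply Ideal.span_le.mpr
      rintro q ⟨k, f, ⟨hfJ, -⟩, rfl⟩
      exact hNI k f hfJ
  have hDle : Did K X ≤ nspan K (iota K '' (I : Set (FA K (Option X)))) := by
    apply nspan_mono
    rintro g ⟨x, rfl⟩
    have hcx : gen K (some x) * tv K - tv K * gen K (some x) ∈ I := by
      apply hC
      apply TwoSidedIdeal.subset_span
      constructor
      · refine ⟨2, fun w hw => ?_⟩
        rw [show tv K (X := X) = gen K (none : Option X) from rfl, gen_mul_gen, gen_mul_gen]
          at hw
        rcases Finset.mem_union.mp (Finsupp.support_sub hw) with h1 | h1 <;>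
          · rw [Finset.mem_singleton.mp (Finsupp.support_single_subset h1)]
            rw [FreeMonoid.length_mul, FreeMonoid.length_of, FreeMonoid.length_of]
      · rw [map_sub, map_mul, map_mul, phi_tv, mul_one, one_mul, sub_self]
    refine ⟨gen K (some x) * tv K - tv K * gen K (some x), hcx, ?_⟩
    rw [show tv K (X := X) = gen K (none : Option X) from rfl, gen_mul_gen, gen_mul_gen,
      iota_sub, iota_single, iota_single, wordExp_pair, wordExp_pair, ← X_mul_X', ← X_mul_X']
  have hLS : IsLSat K (nspan K (iota K '' (I : Set (FA K (Option X))))) := by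
    rintro f ⟨⟨h, rfl⟩, μ, hμ⟩ hXf
    by_cases hf0 : iota K h = 0
    · rw [hf0]
      exact Submodule.zero_mem _
    have hh0 : h ≠ 0 := fun he => hf0 (by rw [he, iota_eq_iotaL, map_zero])
    obtain ⟨w1, hw1⟩ := Finsupp.support_nonempty_iff.mpr (mt MonoidAlgebra.coeff_eq_zero.mp hh0)
    set l := FreeMonoid.length w1 with hl
    have hhom : IsHomog K l h := by
      intro w hw
      have h1 : wordExp w ∈ (iota K h).support := wordExp_mem_support_iota hw
      have h2 : wordExp w1 ∈ (iota K h).support := wordExp_mem_support_iota hw1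
      have h3 := (hμ _ h1).trans (hμ _ h2).symm
      rw [wordExp_def', wordExp_def'] at h3
      exact length_eq_of_placeDeg_eq h3
    have hd : MvPolynomial.totalDegree (iota K h) = l := by
      apply le_antisymm
      · unfold MvPolynomial.totalDegree
        apply Finset.sup_le
        intro m hm
        obtain ⟨w, hw, rfl⟩ := exists_of_mem_support_iota hm
        show (wordExp w).sum (fun _ e => e) ≤ l
        rw [wordExp_def', sum_wordExpAux]
        exact le_of_eq (hhom w hw)
      · unfold MvPolynomial.totalDegree
        have h2 : wordExp w1 ∈ (iota K h).support := wordExp_mem_support_iota hw1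
        have h4 : l ≤ (wordExp w1).sum (fun _ e => e) := by
          rw [wordExp_def', sum_wordExpAux]
          exact Nat.le_of_eq hl
        exact le_trans h4 (Finset.le_sup
          (f := fun s : ((Option X) × ℕ+) →₀ ℕ => s.sum fun _ e => e) h2)
    have hhom' : IsHomog K (MvPolynomial.totalDegree (iota K h)) h := by rw [hd]; exact hhom
    rw [← iota_mul_tv hhom'] at hXf
    have hhtI : h * tv K ∈ I := mem_of_iota_mem_nspan I hGr hXf
    have hhtHom : IsHomog K (l + 1) (h * tv K) := by
      have hmul : h * tv K = h.coeff.sum fun w c =>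
          MonoidAlgebra.single (w * FreeMonoid.of (none : Option X)) c := by
        rw [tv_eq, mul_single_right]
        exact Finsupp.sum_congr fun w _ => by rw [mul_one]
      rw [hmul]
      intro w hw
      rw [MonoidAlgebra.coeff_finsuppSum] at hw
      have hx := Finsupp.support_sum hw
      rw [Finset.mem_biUnion] at hx
      obtain ⟨w', hw', hmem⟩ := hx
      rw [Finset.mem_singleton.mp (Finsupp.support_single_subset hmem)]
      rw [FreeMonoid.length_mul, FreeMonoid.length_of, hhom w' hw']
    by_cases hphi : phi K h = 0
    · have hmemC : h ∈ Cideal K := TwoSidedIdeal.subset_span ⟨⟨l, hhom⟩, hphi⟩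
      exact hmemJ_of_memI h (hC hmemC)
    · have hnotC : h * tv K ∉ Cideal K := by
        intro hc
        have h1 := phi_zero_of_mem_C hc
        rw [map_mul, phi_tv, mul_one] at h1
        exact hphi h1
      have hQmem : hstarO K (phi K (h * tv K)) ∈ I := hSat _ hhtI ⟨l + 1, hhtHom⟩ hnotC
      rw [show phi K (h * tv K) = phi K h from by rw [map_mul, phi_tv, mul_one]] at hQmem
      set e := degF K (phi K h) with he
      have hele : e ≤ l := by
        rw [he]
        unfold degF
        apply Finset.sup_le
        intro w hw
        obtain ⟨w', hw', rfl⟩ := supp_phi (K := K) h w hw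
        calc FreeMonoid.length (delT w') ≤ FreeMonoid.length w' := length_delT_le w'
        _ = l := hhom w' hw'
      have hQt : hstarO K (phi K h) * tv K ^ (l - e) =
          (phi K h).coeff.sum fun w c => MonoidAlgebra.single
            (w * FreeMonoid.of (none : Option X) ^ (e - FreeMonoid.length w) *
              FreeMonoid.of (none : Option X) ^ (l - e)) c := by
        rw [tv_eq, MonoidAlgebra.single_pow, one_pow, hstarO_eq, Finsupp.sum_mul]
        exact Finsupp.sum_congr fun w _ => by
          rw [MonoidAlgebra.single_mul_single, mul_one, mul_assoc, ← pow_add]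
      have hQtHom : IsHomog K l (hstarO K (phi K h) * tv K ^ (l - e)) := by
        rw [hQt]
        intro w hw
        rw [MonoidAlgebra.coeff_finsuppSum] at hw
        have hx := Finsupp.support_sum hw
        rw [Finset.mem_biUnion] at hx
        obtain ⟨w', hw', hmem⟩ := hx
        rw [Finset.mem_singleton.mp (Finsupp.support_single_subset hmem)]
        have hwl : FreeMonoid.length w' ≤ e := by
          rw [he]; unfold degF; exact Finset.le_sup hw'
        rw [FreeMonoid.length_mul, FreeMonoid.length_mul, length_of_pow, length_of_pow]
        omega
      have hdiffC : h - hstarO K (phi K h) * tv K ^ (l - e) ∈ Cideal K := by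
        apply TwoSidedIdeal.subset_span
        constructor
        · refine ⟨l, fun w hw => ?_⟩
          rcases Finset.mem_union.mp (Finsupp.support_sub hw) with h1 | h1
          · exact hhom w h1
          · exact hQtHom w h1
        · rw [map_sub, map_mul, map_pow, phi_tv, one_pow, mul_one,
            phi_hstarO (phi K h) (delT_fixed_phi h), sub_self]
      have hhI : h ∈ I := by
        have h1 : hstarO K (phi K h) * tv K ^ (l - e) ∈ I := I.mul_mem_right _ _ hQmem
        have h2 := I.add_mem (hC hdiffC) h1
        have h3 : h - hstarO K (phi K h) * tv K ^ (l - e) +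
            hstarO K (phi K h) * tv K ^ (l - e) = h := by abel
        rwa [h3] at h2
      exact hmemJ_of_memI h hhI
  exact ⟨⟨hNI, hLP⟩, hDle, hLS⟩
end
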